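/- Let Ω ⊆ ℝ^(n+1) be open, let a : Fin (n+1) → ℝ be pairwise distinct constants, and let u : Ω → ℝ be smooth satisfying the general heavenly hierarchy: for every quadruple of distinct indices i, j, k, l, (a k − a j)(a l − a i) u_{jk} u_{il} + (a i − a k)(a l − a j) u_{ik} u_{jl} + (a j − a i)(a l − a k) u_{ij} u_{kl} = 0 on Ω. Fix λ ∈ ℝ not equal to any a m, and for distinct i, j, k define the vector field U_{ijk} : Ω → ℝ^(n+1) whose ∂_k-component is (1/(λ−a i) − 1/(λ−a j)) u_{ij}, whose ∂_i-component is (1/(λ−a j) − 1/(λ−a k)) u_{jk}, whose ∂_j-component is (1/(λ−a k) − 1/(λ−a i)) u_{ik}, and whose other components vanish. Then for any two triples of distinct indices (i,j,k) and (p,q,r) and any point x ∈ Ω, the Lie bracket [U_{ijk}, U_{pqr}](x) lies in the linear span of { U_{abc}(x) : (a,b,c) a triple of distinct indices }. -/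

import Mathlib

set_option maxHeartbeats 1000000
set_option maxRecDepth 10000

open Topology


/-- The `i`-th standard coordinate (basis) vector of `ℝᵐ`. -/
noncomputable def e (m : ℕ) (i : Fin m) : Fin m → ℝ := Pi.single i 1

/-- Partial derivative `∂f/∂xⁱ` of a scalar function on `ℝᵐ`. -/
noncomputable def pd (m : ℕ) (f : (Fin m → ℝ) → ℝ) (i : Fin m) (x : Fin m → ℝ) : ℝ :=
  fderiv ℝ f x (e m i)

/-- Second partial derivative `∂²f/∂xⁱ∂xʲ`. -/
noncomputable def pd2 (m : ℕ) (f : (Fin m → ℝ) → ℝ) (i j : Fin m) (x : Fin m → ℝ) : ℝ :=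
  pd m (fun y => pd m f i y) j x

/-- Lie bracket of vector fields on (an open subset of) `ℝᵐ`:
`[X,Y](x) = DY(x)·X(x) − DX(x)·Y(x)`. -/
noncomputable def vbr (m : ℕ) (X Y : (Fin m → ℝ) → (Fin m → ℝ)) (x : Fin m → ℝ) :
    Fin m → ℝ :=
  fderiv ℝ Y x (X x) - fderiv ℝ X x (Y x)

/-- The Lax vector field `U_{ijk}` of the general heavenly hierarchy:
`∂ₖ`-component `(1/(λ-aᵢ) - 1/(λ-aⱼ)) u_{ij}`, `∂ᵢ`-component
`(1/(λ-aⱼ) - 1/(λ-aₖ)) u_{jk}`, `∂ⱼ`-component `(1/(λ-aₖ) - 1/(λ-aᵢ)) u_{ik}`. -/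
noncomputable def Ufield (n : ℕ) (a : Fin (n+1) → ℝ) (lam : ℝ)
    (u : (Fin (n+1) → ℝ) → ℝ) (i j k : Fin (n+1)) (x : Fin (n+1) → ℝ) :
    Fin (n+1) → ℝ :=
  ((1/(lam - a i) - 1/(lam - a j)) * pd2 (n+1) u i j x) • e (n+1) k
  + ((1/(lam - a j) - 1/(lam - a k)) * pd2 (n+1) u j k x) • e (n+1) i
  + ((1/(lam - a k) - 1/(lam - a i)) * pd2 (n+1) u i k x) • e (n+1) j


lemma alg(A B C D x1 x2 x3 x4 x5 x6 : ℝ) (hA : A ≠ 0) (hB : B ≠ 0) (hC : C ≠ 0) (hD : D ≠ 0)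
    (h : (B-C)*(A-D)*(x1*x2) + (C-A)*(B-D)*(x6*x3) + (A-B)*(C-D)*(x5*x4) = 0) :
    ((1/B-1/C)*x1)*((1/A-1/D)*x2) + ((1/C-1/D)*x4)*((1/A-1/B)*x5)
      - ((1/B-1/D)*x3)*((1/A-1/C)*x6) = 0 := by
  have key : ((1/B-1/C)*x1)*((1/A-1/D)*x2) + ((1/C-1/D)*x4)*((1/A-1/B)*x5)
      - ((1/B-1/D)*x3)*((1/A-1/C)*x6)
      = ((B-C)*(A-D)*(x1*x2) + (C-A)*(B-D)*(x6*x3) + (A-B)*(C-D)*(x5*x4)) / (A*B*C*D) := by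
    field_simp
    ring
  rw [key, h, zero_div]

section Aux
variable {M : ℕ} {Ω : Set (Fin M → ℝ)} {f : (Fin M → ℝ) → ℝ}

lemma pd_smooth (hΩ : IsOpen Ω) (hf : ContDiffOn ℝ (⊤:ℕ∞) f Ω) (b : Fin M) :
    ContDiffOn ℝ (⊤:ℕ∞) (pd M f b) Ω := by
  have h1 : ContDiffOn ℝ (⊤:ℕ∞) (fderiv ℝ f) Ω := by
    apply hf.fderiv_of_isOpen hΩ
    · norm_cast
  exact (ContinuousLinearMap.apply ℝ ℝ (e M b)).contDiff.comp_contDiffOn h1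

lemma pd2_smooth (hΩ : IsOpen Ω) (hf : ContDiffOn ℝ (⊤:ℕ∞) f Ω) (b c : Fin M) :
    ContDiffOn ℝ (⊤:ℕ∞) (pd2 M f b c) Ω :=
  pd_smooth hΩ (pd_smooth hΩ hf b) c

lemma diffAt_of_smoothOn {F : Type*} [NormedAddCommGroup F] [NormedSpace ℝ F]
    {g : (Fin M → ℝ) → F} (hΩ : IsOpen Ω) (hf : ContDiffOn ℝ (⊤:ℕ∞) g Ω) {y} (hy : y ∈ Ω) :
    DifferentiableAt ℝ g y := by
  have := (hf y hy).contDiffAt (hΩ.mem_nhds hy)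
  exact this.differentiableAt (by simp)

lemma schwarz (hΩ : IsOpen Ω) (hf : ContDiffOn ℝ (⊤:ℕ∞) f Ω) {y} (hy : y ∈ Ω) (b c : Fin M) :
    pd2 M f b c y = pd2 M f c b y := by
  have hD1 : ContDiffOn ℝ (⊤:ℕ∞) (fderiv ℝ f) Ω := by
    apply hf.fderiv_of_isOpen hΩ; norm_cast
  have hd : DifferentiableAt ℝ (fderiv ℝ f) y := diffAt_of_smoothOn hΩ hD1 hy
  set f'' := fderiv ℝ (fderiv ℝ f) y with hf''def
  have hf'' : HasFDerivAt (fderiv ℝ f) f'' y := hd.hasFDerivAt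
  have key : ∀ b c : Fin M, pd2 M f b c y = f'' (e M c) (e M b) := by
    intro b c
    have hc : HasFDerivAt (fun z => fderiv ℝ f z (e M b))
        ((ContinuousLinearMap.apply ℝ ℝ (e M b)).comp f'') y :=
      (ContinuousLinearMap.apply ℝ ℝ (e M b)).hasFDerivAt.comp y hf''
    show fderiv ℝ (fun z => fderiv ℝ f z (e M b)) y (e M c) = _
    rw [hc.fderiv]
    rfl
  rw [key, key]
  have hfe : ∀ᶠ z in 𝓝 y, HasFDerivAt f (fderiv ℝ f z) z := by
    filter_upwards [hΩ.mem_nhds hy] with z hz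
    exact (diffAt_of_smoothOn hΩ hf hz).hasFDerivAt
  exact second_derivative_symmetric_of_eventually hfe hf'' _ _

end Aux

noncomputable def gg {n : ℕ} (a : Fin (n+1) → ℝ) (lam : ℝ) (u : (Fin (n+1) → ℝ) → ℝ)
    (b c : Fin (n+1)) (y : Fin (n+1) → ℝ) : ℝ :=
  (1/(lam - a b) - 1/(lam - a c)) * pd2 (n+1) u b c y

lemma Ufield_eq {n : ℕ} (a : Fin (n+1) → ℝ) (lam : ℝ) (u : (Fin (n+1) → ℝ) → ℝ)
    (i j k : Fin (n+1)) :
    Ufield n a lam u i j k = fun y =>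
      gg a lam u i j y • e (n+1) k + gg a lam u j k y • e (n+1) i
        - gg a lam u i k y • e (n+1) j := by
  funext y
  show _ • e (n+1) k + _ • e (n+1) i + _ • e (n+1) j = _
  have h3 : (1/(lam - a k) - 1/(lam - a i)) * pd2 (n+1) u i k y = -(gg a lam u i k y) := by
    unfold gg; ring
  rw [h3, neg_smul, ← sub_eq_add_neg]
  rfl

section Aux2
variable {n : ℕ} {Ω : Set (Fin (n+1) → ℝ)} {a : Fin (n+1) → ℝ} {lam : ℝ}
  {u : (Fin (n+1) → ℝ) → ℝ}

lemma gg_diag (b : Fin (n+1)) (y : Fin (n+1) → ℝ) : gg a lam u b b y = 0 := by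
  unfold gg; ring

lemma gg_antisymm (hΩ : IsOpen Ω) (hu : ContDiffOn ℝ (⊤:ℕ∞) u Ω) {y} (hy : y ∈ Ω)
    (b c : Fin (n+1)) : gg a lam u c b y = - gg a lam u b c y := by
  unfold gg
  rw [schwarz hΩ hu hy c b]
  ring

lemma pluecker (hΩ : IsOpen Ω) (hu : ContDiffOn ℝ (⊤:ℕ∞) u Ω)
    (hgh : ∀ i j k l : Fin (n+1),
      i ≠ j → i ≠ k → i ≠ l → j ≠ k → j ≠ l → k ≠ l → ∀ x ∈ Ω,
      (a k - a j) * (a l - a i) * (pd2 (n+1) u j k x * pd2 (n+1) u i l x)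
      + (a i - a k) * (a l - a j) * (pd2 (n+1) u i k x * pd2 (n+1) u j l x)
      + (a j - a i) * (a l - a k) * (pd2 (n+1) u i j x * pd2 (n+1) u k l x) = 0)
    (hlam : ∀ m, lam ≠ a m) {i j k : Fin (n+1)}
    (hij : i ≠ j) (hjk : j ≠ k) (hik : i ≠ k) (b : Fin (n+1)) {y} (hy : y ∈ Ω) :
    gg a lam u i j y * gg a lam u b k y + gg a lam u j k y * gg a lam u b i y
      - gg a lam u i k y * gg a lam u b j y = 0 := by
  by_cases hbi : b = i
  · subst hbi; unfold gg; ring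
  by_cases hbj : b = j
  · subst hbj; unfold gg
    rw [schwarz hΩ hu hy b i]
    ring
  by_cases hbk : b = k
  · subst hbk; unfold gg
    rw [schwarz hΩ hu hy b i, schwarz hΩ hu hy b j]
    ring
  · have h := hgh b i j k hbi hbj hbk hij hik hjk y hy
    have e1 : lam - a b ≠ 0 := sub_ne_zero.2 (hlam b)
    have e2 : lam - a i ≠ 0 := sub_ne_zero.2 (hlam i)
    have e3 : lam - a j ≠ 0 := sub_ne_zero.2 (hlam j)
    have e4 : lam - a k ≠ 0 := sub_ne_zero.2 (hlam k)
    have h' : ((lam - a i)-(lam - a j))*((lam - a b)-(lam - a k))*(pd2 (n+1) u i j y * pd2 (n+1) u b k y)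
        + ((lam - a j)-(lam - a b))*((lam - a i)-(lam - a k))*(pd2 (n+1) u b j y * pd2 (n+1) u i k y)
        + ((lam - a b)-(lam - a i))*((lam - a j)-(lam - a k))*(pd2 (n+1) u b i y * pd2 (n+1) u j k y) = 0 := by
      linear_combination h
    unfold gg
    exact alg (lam - a b) (lam - a i) (lam - a j) (lam - a k) (pd2 (n+1) u i j y)
      (pd2 (n+1) u b k y) (pd2 (n+1) u i k y) (pd2 (n+1) u j k y) (pd2 (n+1) u b i y)
      (pd2 (n+1) u b j y) e1 e2 e3 e4 h'

end Aux2

section Aux3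
variable {n : ℕ} {Ω : Set (Fin (n+1) → ℝ)} {a : Fin (n+1) → ℝ} {lam : ℝ}
  {u : (Fin (n+1) → ℝ) → ℝ}

lemma gg_hasFDerivAt (hΩ : IsOpen Ω) (hu : ContDiffOn ℝ (⊤:ℕ∞) u Ω) {y} (hy : y ∈ Ω)
    (b c : Fin (n+1)) :
    HasFDerivAt (gg a lam u b c)
      ((1/(lam - a b) - 1/(lam - a c)) • fderiv ℝ (pd2 (n+1) u b c) y) y := by
  exact ((diffAt_of_smoothOn hΩ (pd2_smooth hΩ hu b c) hy).hasFDerivAt).const_mul _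

lemma pluecker_deriv (hΩ : IsOpen Ω) (hu : ContDiffOn ℝ (⊤:ℕ∞) u Ω)
    (hgh : ∀ i j k l : Fin (n+1),
      i ≠ j → i ≠ k → i ≠ l → j ≠ k → j ≠ l → k ≠ l → ∀ x ∈ Ω,
      (a k - a j) * (a l - a i) * (pd2 (n+1) u j k x * pd2 (n+1) u i l x)
      + (a i - a k) * (a l - a j) * (pd2 (n+1) u i k x * pd2 (n+1) u j l x)
      + (a j - a i) * (a l - a k) * (pd2 (n+1) u i j x * pd2 (n+1) u k l x) = 0)
    (hlam : ∀ m, lam ≠ a m) {p q r : Fin (n+1)}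
    (hpq : p ≠ q) (hqr : q ≠ r) (hpr : p ≠ r) (s : Fin (n+1)) {y} (hy : y ∈ Ω)
    (v : Fin (n+1) → ℝ) :
    gg a lam u p q y * ((1/(lam - a s) - 1/(lam - a r)) * fderiv ℝ (pd2 (n+1) u s r) y v)
    + gg a lam u s r y * ((1/(lam - a p) - 1/(lam - a q)) * fderiv ℝ (pd2 (n+1) u p q) y v)
    + (gg a lam u q r y * ((1/(lam - a s) - 1/(lam - a p)) * fderiv ℝ (pd2 (n+1) u s p) y v)
    + gg a lam u s p y * ((1/(lam - a q) - 1/(lam - a r)) * fderiv ℝ (pd2 (n+1) u q r) y v))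
    - (gg a lam u p r y * ((1/(lam - a s) - 1/(lam - a q)) * fderiv ℝ (pd2 (n+1) u s q) y v)
    + gg a lam u s q y * ((1/(lam - a p) - 1/(lam - a r)) * fderiv ℝ (pd2 (n+1) u p r) y v))
    = 0 := by
  have hD := fun b c => gg_hasFDerivAt (a := a) (lam := lam) hΩ hu hy b c
  have hΦ := (((hD p q).mul (hD s r)).add ((hD q r).mul (hD s p))).sub ((hD p r).mul (hD s q))
  have h0 : (gg a lam u p q y • ((1/(lam - a s) - 1/(lam - a r)) • fderiv ℝ (pd2 (n+1) u s r) y)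
      + gg a lam u s r y • ((1/(lam - a p) - 1/(lam - a q)) • fderiv ℝ (pd2 (n+1) u p q) y)
      + (gg a lam u q r y • ((1/(lam - a s) - 1/(lam - a p)) • fderiv ℝ (pd2 (n+1) u s p) y)
      + gg a lam u s p y • ((1/(lam - a q) - 1/(lam - a r)) • fderiv ℝ (pd2 (n+1) u q r) y))
      - (gg a lam u p r y • ((1/(lam - a s) - 1/(lam - a q)) • fderiv ℝ (pd2 (n+1) u s q) y)
      + gg a lam u s q y • ((1/(lam - a p) - 1/(lam - a r)) • fderiv ℝ (pd2 (n+1) u p r) y)))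
      = (0 : (Fin (n+1) → ℝ) →L[ℝ] ℝ) := by
    have heq : (fun z => gg a lam u p q z * gg a lam u s r z
        + gg a lam u q r z * gg a lam u s p z
        - gg a lam u p r z * gg a lam u s q z) =ᶠ[𝓝 y] (fun _ => (0:ℝ)) := by
      filter_upwards [hΩ.mem_nhds hy] with z hz
      exact pluecker hΩ hu hgh hlam hpq hqr hpr s hz
    rw [← hΦ.fderiv, Filter.EventuallyEq.fderiv_eq (show (gg a lam u p q * gg a lam u s r + gg a lam u q r * gg a lam u s p - gg a lam u p r * gg a lam u s q) =ᶠ[𝓝 y] (fun _ => (0:ℝ)) from heq)]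
    simp
  have h1 := congrArg (fun (T : (Fin (n+1) → ℝ) →L[ℝ] ℝ) => T v) h0
  simp only [ContinuousLinearMap.add_apply, ContinuousLinearMap.sub_apply,
    ContinuousLinearMap.coe_smul', Pi.smul_apply, smul_eq_mul,
    ContinuousLinearMap.zero_apply] at h1
  linear_combination h1


lemma Gsym1 (hΩ : IsOpen Ω) (hu : ContDiffOn ℝ (⊤:ℕ∞) u Ω) {y} (hy : y ∈ Ω)
    (b c s : Fin (n+1)) :
    fderiv ℝ (pd2 (n+1) u b c) y (e (n+1) s) = fderiv ℝ (pd2 (n+1) u c b) y (e (n+1) s) := by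
  have hev : pd2 (n+1) u b c =ᶠ[𝓝 y] pd2 (n+1) u c b := by
    filter_upwards [hΩ.mem_nhds hy] with z hz
    exact schwarz hΩ hu hz b c
  rw [hev.fderiv_eq]

lemma Gsym2 (hΩ : IsOpen Ω) (hu : ContDiffOn ℝ (⊤:ℕ∞) u Ω) {y} (hy : y ∈ Ω)
    (b c s : Fin (n+1)) :
    fderiv ℝ (pd2 (n+1) u b c) y (e (n+1) s) = fderiv ℝ (pd2 (n+1) u b s) y (e (n+1) c) :=
  schwarz hΩ (pd_smooth hΩ hu b) hy c s

end Aux3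

lemma sum6 {M : ℕ} (w : Fin M → ℝ) (c1 c2 c3 c4 c5 c6 : ℝ) (t1 t2 t3 t4 t5 t6 : Fin M) :
    ∑ t, w t * (c1 * e M t1 t + c2 * e M t2 t - c3 * e M t3 t
      - (c4 * e M t4 t + c5 * e M t5 t - c6 * e M t6 t))
    = c1 * w t1 + c2 * w t2 - c3 * w t3 - (c4 * w t4 + c5 * w t5 - c6 * w t6) := by
  have h : ∀ (c : ℝ) (s : Fin M), ∑ t, w t * (c * e M s t) = c * w s := by
    intro c s
    rw [Finset.sum_eq_single s]
    · simp [e]; ring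
    · intro t _ hts
      simp [e, Pi.single_apply, hts]
    · simp
  calc ∑ t, w t * (c1 * e M t1 t + c2 * e M t2 t - c3 * e M t3 t
        - (c4 * e M t4 t + c5 * e M t5 t - c6 * e M t6 t))
      = ∑ t, (w t * (c1 * e M t1 t) + w t * (c2 * e M t2 t) - w t * (c3 * e M t3 t)
        - (w t * (c4 * e M t4 t) + w t * (c5 * e M t5 t) - w t * (c6 * e M t6 t))) := by
        apply Finset.sum_congr rfl; intros; ring
    _ = _ := by
        simp only [Finset.sum_sub_distrib, Finset.sum_add_distrib, h]


/-- On every solution of the general heavenly hierarchy, the Lie bracket of any two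
Lax fields `U_{ijk}`, `U_{pqr}` lies in the pointwise span of all the Lax fields:
the Lax distribution is involutive. -/
theorem stmt_5 (n : ℕ) (Ω : Set (Fin (n+1) → ℝ)) (hΩ : IsOpen Ω)
    (a : Fin (n+1) → ℝ) (ha : Function.Injective a)
    (u : (Fin (n+1) → ℝ) → ℝ) (hu : ContDiffOn ℝ (⊤:ℕ∞) u Ω)
    (hgh : ∀ i j k l : Fin (n+1),
      i ≠ j → i ≠ k → i ≠ l → j ≠ k → j ≠ l → k ≠ l → ∀ x ∈ Ω,
      (a k - a j) * (a l - a i) * (pd2 (n+1) u j k x * pd2 (n+1) u i l x)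
      + (a i - a k) * (a l - a j) * (pd2 (n+1) u i k x * pd2 (n+1) u j l x)
      + (a j - a i) * (a l - a k) * (pd2 (n+1) u i j x * pd2 (n+1) u k l x) = 0)
    (lam : ℝ) (hlam : ∀ m, lam ≠ a m)
    (i j k p q r : Fin (n+1))
    (hij : i ≠ j) (hjk : j ≠ k) (hik : i ≠ k)
    (hpq : p ≠ q) (hqr : q ≠ r) (hpr : p ≠ r)
    (x : Fin (n+1) → ℝ) (hx : x ∈ Ω) :
    vbr (n+1) (Ufield n a lam u i j k) (Ufield n a lam u p q r) x ∈
      Submodule.span ℝ { y : Fin (n+1) → ℝ | ∃ b c d : Fin (n+1),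
        b ≠ c ∧ c ≠ d ∧ b ≠ d ∧ y = Ufield n a lam u b c d x } := by
  classical
  have hUeq : ∀ b c d : Fin (n+1), Ufield n a lam u b c d = fun y =>
      gg a lam u b c y • e (n+1) d + gg a lam u c d y • e (n+1) b
        - gg a lam u b d y • e (n+1) c := fun b c d => Ufield_eq a lam u b c d
  have hDU : ∀ b c d : Fin (n+1), HasFDerivAt (Ufield n a lam u b c d)
      ((((1/(lam - a b) - 1/(lam - a c)) • fderiv ℝ (pd2 (n+1) u b c) x).smulRight (e (n+1) d)
        + ((1/(lam - a c) - 1/(lam - a d)) • fderiv ℝ (pd2 (n+1) u c d) x).smulRight (e (n+1) b))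
        - ((1/(lam - a b) - 1/(lam - a d)) • fderiv ℝ (pd2 (n+1) u b d) x).smulRight (e (n+1) c))
      x := by
    intro b c d
    rw [hUeq b c d]
    exact (((gg_hasFDerivAt hΩ hu hx b c).smul_const (e (n+1) d)).add
      ((gg_hasFDerivAt hΩ hu hx c d).smul_const (e (n+1) b))).sub
      ((gg_hasFDerivAt hΩ hu hx b d).smul_const (e (n+1) c))
  set XX := Ufield n a lam u i j k x with hXXdef
  set YY := Ufield n a lam u p q r x with hYYdef
  set B : Fin (n+1) → ℝ :=
    vbr (n+1) (Ufield n a lam u i j k) (Ufield n a lam u p q r) x with hBdef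
  have hXe : XX = gg a lam u i j x • e (n+1) k + gg a lam u j k x • e (n+1) i
      - gg a lam u i k x • e (n+1) j := by
    rw [hXXdef, hUeq i j k]
  have hYe : YY = gg a lam u p q x • e (n+1) r + gg a lam u q r x • e (n+1) p
      - gg a lam u p r x • e (n+1) q := by
    rw [hYYdef, hUeq p q r]
  have hBt : ∀ t, B t =
      (1/(lam - a p) - 1/(lam - a q)) * fderiv ℝ (pd2 (n+1) u p q) x XX * e (n+1) r t
      + (1/(lam - a q) - 1/(lam - a r)) * fderiv ℝ (pd2 (n+1) u q r) x XX * e (n+1) p t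
      - (1/(lam - a p) - 1/(lam - a r)) * fderiv ℝ (pd2 (n+1) u p r) x XX * e (n+1) q t
      - ((1/(lam - a i) - 1/(lam - a j)) * fderiv ℝ (pd2 (n+1) u i j) x YY * e (n+1) k t
      + (1/(lam - a j) - 1/(lam - a k)) * fderiv ℝ (pd2 (n+1) u j k) x YY * e (n+1) i t
      - (1/(lam - a i) - 1/(lam - a k)) * fderiv ℝ (pd2 (n+1) u i k) x YY * e (n+1) j t) := by
    intro t
    have hv : B = fderiv ℝ (Ufield n a lam u p q r) x XX
        - fderiv ℝ (Ufield n a lam u i j k) x YY := rfl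
    rw [hv, (hDU p q r).fderiv, (hDU i j k).fderiv]
    simp only [ContinuousLinearMap.sub_apply, ContinuousLinearMap.add_apply,
      ContinuousLinearMap.smulRight_apply, ContinuousLinearMap.coe_smul', Pi.smul_apply,
      smul_eq_mul, Pi.sub_apply, Pi.add_apply]
    try ring
  have hA : ∀ b c : Fin (n+1), gg a lam u c b x = - gg a lam u b c x :=
    fun b c => gg_antisymm hΩ hu hx b c
  -- the key identity : B is killed by every row of the matrix (gg b c x)
  have key : ∀ d : Fin (n+1), ∑ t, gg a lam u d t x * B t = 0 := by
    intro d
    have hTX : ∀ b c : Fin (n+1), fderiv ℝ (pd2 (n+1) u b c) x XX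
        = gg a lam u i j x * fderiv ℝ (pd2 (n+1) u b c) x (e (n+1) k)
          + gg a lam u j k x * fderiv ℝ (pd2 (n+1) u b c) x (e (n+1) i)
          - gg a lam u i k x * fderiv ℝ (pd2 (n+1) u b c) x (e (n+1) j) := by
      intro b c
      rw [hXe, map_sub, map_add, map_smul, map_smul, map_smul]
      simp [smul_eq_mul]
    have hTY : ∀ b c : Fin (n+1), fderiv ℝ (pd2 (n+1) u b c) x YY
        = gg a lam u p q x * fderiv ℝ (pd2 (n+1) u b c) x (e (n+1) r)
          + gg a lam u q r x * fderiv ℝ (pd2 (n+1) u b c) x (e (n+1) p)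
          - gg a lam u p r x * fderiv ℝ (pd2 (n+1) u b c) x (e (n+1) q) := by
      intro b c
      rw [hYe, map_sub, map_add, map_smul, map_smul, map_smul]
      simp [smul_eq_mul]
    have hdot : ∑ t, gg a lam u d t x * B t =
        (1/(lam - a p) - 1/(lam - a q)) * fderiv ℝ (pd2 (n+1) u p q) x XX * gg a lam u d r x
        + (1/(lam - a q) - 1/(lam - a r)) * fderiv ℝ (pd2 (n+1) u q r) x XX * gg a lam u d p x
        - (1/(lam - a p) - 1/(lam - a r)) * fderiv ℝ (pd2 (n+1) u p r) x XX * gg a lam u d q x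
        - ((1/(lam - a i) - 1/(lam - a j)) * fderiv ℝ (pd2 (n+1) u i j) x YY * gg a lam u d k x
        + (1/(lam - a j) - 1/(lam - a k)) * fderiv ℝ (pd2 (n+1) u j k) x YY * gg a lam u d i x
        - (1/(lam - a i) - 1/(lam - a k)) * fderiv ℝ (pd2 (n+1) u i k) x YY * gg a lam u d j x) := by
      calc ∑ t, gg a lam u d t x * B t
          = ∑ t, gg a lam u d t x *
            ((1/(lam - a p) - 1/(lam - a q)) * fderiv ℝ (pd2 (n+1) u p q) x XX * e (n+1) r t
            + (1/(lam - a q) - 1/(lam - a r)) * fderiv ℝ (pd2 (n+1) u q r) x XX * e (n+1) p t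
            - (1/(lam - a p) - 1/(lam - a r)) * fderiv ℝ (pd2 (n+1) u p r) x XX * e (n+1) q t
            - ((1/(lam - a i) - 1/(lam - a j)) * fderiv ℝ (pd2 (n+1) u i j) x YY * e (n+1) k t
            + (1/(lam - a j) - 1/(lam - a k)) * fderiv ℝ (pd2 (n+1) u j k) x YY * e (n+1) i t
            - (1/(lam - a i) - 1/(lam - a k)) * fderiv ℝ (pd2 (n+1) u i k) x YY * e (n+1) j t)) :=
            Finset.sum_congr rfl (fun t _ => by rw [hBt t])
        _ = _ := sum6 _ _ _ _ _ _ _ _ _ _ _ _ _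
    rw [hdot]
    have h1 := pluecker_deriv hΩ hu hgh hlam hpq hqr hpr d hx XX
    have h2 := pluecker_deriv hΩ hu hgh hlam hij hjk hik d hx YY
    have h3k := pluecker_deriv hΩ hu hgh hlam hpq hqr hpr k hx (e (n+1) d)
    have h3i := pluecker_deriv hΩ hu hgh hlam hpq hqr hpr i hx (e (n+1) d)
    have h3j := pluecker_deriv hΩ hu hgh hlam hpq hqr hpr j hx (e (n+1) d)
    have h4r := pluecker hΩ hu hgh hlam hij hjk hik r hx
    have h4p := pluecker hΩ hu hgh hlam hij hjk hik p hx
    have h4q := pluecker hΩ hu hgh hlam hij hjk hik q hx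
    have Gs2 : ∀ b c s : Fin (n+1), fderiv ℝ (pd2 (n+1) u b c) x (e (n+1) s)
        = fderiv ℝ (pd2 (n+1) u b s) x (e (n+1) c) := fun b c s => Gsym2 hΩ hu hx b c s
    have Gs1 : ∀ b c s : Fin (n+1), fderiv ℝ (pd2 (n+1) u b c) x (e (n+1) s)
        = fderiv ℝ (pd2 (n+1) u c b) x (e (n+1) s) := fun b c s => Gsym1 hΩ hu hx b c s
    have Gs3 : ∀ b c s : Fin (n+1), fderiv ℝ (pd2 (n+1) u b c) x (e (n+1) s)
        = fderiv ℝ (pd2 (n+1) u s c) x (e (n+1) b) :=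
      fun b c s => (Gs2 b c s).trans ((Gs1 b s c).trans (Gs2 s b c))
    linear_combination
      h1
      - h2
      - (gg a lam u p q x * (1/(lam - a d) - 1/(lam - a r))) * (hTX d r)
      - (gg a lam u q r x * (1/(lam - a d) - 1/(lam - a p))) * (hTX d p)
      + (gg a lam u p r x * (1/(lam - a d) - 1/(lam - a q))) * (hTX d q)
      + (gg a lam u i j x * (1/(lam - a d) - 1/(lam - a k))) * (hTY d k)
      + (gg a lam u j k x * (1/(lam - a d) - 1/(lam - a i))) * (hTY d i)
      - (gg a lam u i k x * (1/(lam - a d) - 1/(lam - a j))) * (hTY d j)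
      + (gg a lam u p q x * gg a lam u i j x * (1/(lam - a d) - 1/(lam - a k))) * (Gs2 d k r)
      + (gg a lam u p q x * gg a lam u j k x * (1/(lam - a d) - 1/(lam - a i))) * (Gs2 d i r)
      - (gg a lam u p q x * gg a lam u i k x * (1/(lam - a d) - 1/(lam - a j))) * (Gs2 d j r)
      + (gg a lam u q r x * gg a lam u i j x * (1/(lam - a d) - 1/(lam - a k))) * (Gs2 d k p)
      + (gg a lam u q r x * gg a lam u j k x * (1/(lam - a d) - 1/(lam - a i))) * (Gs2 d i p)
      - (gg a lam u q r x * gg a lam u i k x * (1/(lam - a d) - 1/(lam - a j))) * (Gs2 d j p)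
      - (gg a lam u p r x * gg a lam u i j x * (1/(lam - a d) - 1/(lam - a k))) * (Gs2 d k q)
      - (gg a lam u p r x * gg a lam u j k x * (1/(lam - a d) - 1/(lam - a i))) * (Gs2 d i q)
      + (gg a lam u p r x * gg a lam u i k x * (1/(lam - a d) - 1/(lam - a j))) * (Gs2 d j q)
      - (gg a lam u i j x) * h3k
      - (gg a lam u j k x) * h3i
      + (gg a lam u i k x) * h3j
      + (gg a lam u i j x * gg a lam u p q x * (1/(lam - a k) - 1/(lam - a r))) * (Gs3 k r d)
      + (gg a lam u j k x * gg a lam u p q x * (1/(lam - a i) - 1/(lam - a r))) * (Gs3 i r d)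
      - (gg a lam u i k x * gg a lam u p q x * (1/(lam - a j) - 1/(lam - a r))) * (Gs3 j r d)
      + (gg a lam u i j x * gg a lam u q r x * (1/(lam - a k) - 1/(lam - a p))) * (Gs3 k p d)
      + (gg a lam u j k x * gg a lam u q r x * (1/(lam - a i) - 1/(lam - a p))) * (Gs3 i p d)
      - (gg a lam u i k x * gg a lam u q r x * (1/(lam - a j) - 1/(lam - a p))) * (Gs3 j p d)
      - (gg a lam u i j x * gg a lam u p r x * (1/(lam - a k) - 1/(lam - a q))) * (Gs3 k q d)
      - (gg a lam u j k x * gg a lam u p r x * (1/(lam - a i) - 1/(lam - a q))) * (Gs3 i q d)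
      + (gg a lam u i k x * gg a lam u p r x * (1/(lam - a j) - 1/(lam - a q))) * (Gs3 j q d)
      - ((1/(lam - a p) - 1/(lam - a q)) * fderiv ℝ (pd2 (n+1) u p q) x (e (n+1) d)) * h4r
      + ((1/(lam - a p) - 1/(lam - a q)) * fderiv ℝ (pd2 (n+1) u p q) x (e (n+1) d) * gg a lam u i j x) * (hA r k)
      + ((1/(lam - a p) - 1/(lam - a q)) * fderiv ℝ (pd2 (n+1) u p q) x (e (n+1) d) * gg a lam u j k x) * (hA r i)
      - ((1/(lam - a p) - 1/(lam - a q)) * fderiv ℝ (pd2 (n+1) u p q) x (e (n+1) d) * gg a lam u i k x) * (hA r j)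
      - ((1/(lam - a q) - 1/(lam - a r)) * fderiv ℝ (pd2 (n+1) u q r) x (e (n+1) d)) * h4p
      + ((1/(lam - a q) - 1/(lam - a r)) * fderiv ℝ (pd2 (n+1) u q r) x (e (n+1) d) * gg a lam u i j x) * (hA p k)
      + ((1/(lam - a q) - 1/(lam - a r)) * fderiv ℝ (pd2 (n+1) u q r) x (e (n+1) d) * gg a lam u j k x) * (hA p i)
      - ((1/(lam - a q) - 1/(lam - a r)) * fderiv ℝ (pd2 (n+1) u q r) x (e (n+1) d) * gg a lam u i k x) * (hA p j)
      + ((1/(lam - a p) - 1/(lam - a r)) * fderiv ℝ (pd2 (n+1) u p r) x (e (n+1) d)) * h4q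
      - ((1/(lam - a p) - 1/(lam - a r)) * fderiv ℝ (pd2 (n+1) u p r) x (e (n+1) d) * gg a lam u i j x) * (hA q k)
      - ((1/(lam - a p) - 1/(lam - a r)) * fderiv ℝ (pd2 (n+1) u p r) x (e (n+1) d) * gg a lam u j k x) * (hA q i)
      + ((1/(lam - a p) - 1/(lam - a r)) * fderiv ℝ (pd2 (n+1) u p r) x (e (n+1) d) * gg a lam u i k x) * (hA q j)
  -- now conclude
  by_cases hall : ∀ b c : Fin (n+1), gg a lam u b c x = 0
  · have hXX0 : XX = 0 := by
      rw [hXe, hall i j, hall j k, hall i k]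
      simp
    have hYY0 : YY = 0 := by
      rw [hYe, hall p q, hall q r, hall p r]
      simp
    have hB0 : B = 0 := by
      have hv : B = fderiv ℝ (Ufield n a lam u p q r) x XX
          - fderiv ℝ (Ufield n a lam u i j k) x YY := rfl
      rw [hv, hXX0, hYY0, map_zero, map_zero, sub_zero]
    rw [hB0]
    exact Submodule.zero_mem _
  · push_neg at hall
    obtain ⟨b, c, hbc0⟩ := hall
    have hbc : b ≠ c := by
      rintro rfl
      exact hbc0 (gg_diag b x)
    have hterm : ∀ (d : Fin (n+1)) (t : Fin (n+1)), (B d • Ufield n a lam u b c d x) t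
        = B d * (gg a lam u b c x * e (n+1) d t + gg a lam u c d x * e (n+1) b t
          - gg a lam u b d x * e (n+1) c t) := by
      intro d t
      rw [hUeq b c d]
      simp only [Pi.smul_apply, Pi.add_apply, Pi.sub_apply, smul_eq_mul]
      try ring
    have hsplit : ∀ w : Fin (n+1) → ℝ,
        ∑ d ∈ Finset.univ \ {b, c}, w d = (∑ d, w d) - (w b + w c) := by
      intro w
      have h2 := Finset.sum_sdiff (f := w) (Finset.subset_univ ({b, c} : Finset (Fin (n+1))))
      rw [Finset.sum_pair hbc] at h2
      linarith [h2]
    have hBspan : gg a lam u b c x • B =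
        ∑ d ∈ Finset.univ \ {b, c}, B d • Ufield n a lam u b c d x := by
      funext t
      rw [Finset.sum_apply]
      rw [show (gg a lam u b c x • B) t = gg a lam u b c x * B t from rfl]
      by_cases htb : t = b
      · subst htb
        have hstep : ∀ d ∈ Finset.univ \ {t, c},
            (B d • Ufield n a lam u t c d x) t = gg a lam u c d x * B d := by
          intro d hd
          rw [Finset.mem_sdiff] at hd
          have hdb : d ≠ t := fun h => hd.2 (by simp [h])
          have hdc : d ≠ c := fun h => hd.2 (by simp [h])
          rw [hterm d]
          simp [e, Pi.single_apply, Ne.symm hdb, hbc, Ne.symm hbc]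
          try ring
        rw [Finset.sum_congr rfl hstep, hsplit (fun d => gg a lam u c d x * B d)]
        have hk := key c
        linear_combination (-1 : ℝ) * hk + B t * hA t c
          + B c * gg_diag (a := a) (lam := lam) (u := u) c x
      · by_cases htc : t = c
        · subst htc
          have hstep : ∀ d ∈ Finset.univ \ {b, t},
              (B d • Ufield n a lam u b t d x) t = -(gg a lam u b d x * B d) := by
            intro d hd
            rw [Finset.mem_sdiff] at hd
            have hdb : d ≠ b := fun h => hd.2 (by simp [h])
            have hdc : d ≠ t := fun h => hd.2 (by simp [h])
            rw [hterm d]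
            simp [e, Pi.single_apply, Ne.symm hdc, hbc, Ne.symm hbc, htb]
            try ring
          rw [Finset.sum_congr rfl hstep, hsplit (fun d => -(gg a lam u b d x * B d)),
            Finset.sum_neg_distrib]
          have hk := key b
          linear_combination hk - B b * gg_diag (a := a) (lam := lam) (u := u) b x
        · rw [Finset.sum_eq_single t]
          · rw [hterm t]
            simp [e, Pi.single_apply, htb, htc]
            try ring
          · intro d _ hdt
            have htd : t ≠ d := Ne.symm hdt
            rw [hterm d]
            simp [e, Pi.single_apply, htb, htc, htd]
          · intro hts
            exact absurd (Finset.mem_sdiff.2 ⟨Finset.mem_univ t, by simp [htb, htc]⟩) hts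
    have hmem : gg a lam u b c x • B ∈ Submodule.span ℝ { y : Fin (n+1) → ℝ |
        ∃ b c d : Fin (n+1), b ≠ c ∧ c ≠ d ∧ b ≠ d ∧ y = Ufield n a lam u b c d x } := by
      rw [hBspan]
      apply Submodule.sum_mem
      intro d hd
      rw [Finset.mem_sdiff] at hd
      have hdb : d ≠ b := fun h => hd.2 (by simp [h])
      have hdc : d ≠ c := fun h => hd.2 (by simp [h])
      exact Submodule.smul_mem _ _
        (Submodule.subset_span ⟨b, c, d, hbc, Ne.symm hdc, Ne.symm hdb, rfl⟩)
    have hfin := Submodule.smul_mem _ (gg a lam u b c x)⁻¹ hmem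
    rwa [smul_smul, inv_mul_cancel₀ hbc0, one_smul] at hfin
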